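/- Given sorted values d_1 ≤ d_2 ≤ ⋯ ≤ d_n and k < n, if α = (k/2)·d_{k+1} − (1/2)·Σ_{j=1}^{k} d_j > 0 and λ = 1/k + (1/(2kα))·Σ_{j=1}^{k} d_j, then the vector s with s_j = max(−d_j/(2α) + λ, 0) has exactly its first k entries positive (assuming d_k < d_{k+1}), satisfies Σ_j s_j = 1, and 0 ≤ s_j ≤ 1 for all j. -/

import Mathlib

open Finset

theorem stmt12 {n k : ℕ} (hk : k < n) (hk1 : 0 < k) (d : Fin n → ℝ)
    (hmono : Monotone d)
    (hlt : d ⟨k - 1, by omega⟩ < d ⟨k, hk⟩)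
    (α lam : ℝ)
    (hα : α = (k : ℝ) / 2 * d ⟨k, hk⟩ -
      (1 / 2) * ∑ i : Fin k, d (Fin.castLE hk.le i))
    (hαpos : 0 < α)
    (hlam : lam = 1 / (k : ℝ) +
      (1 / (2 * (k : ℝ) * α)) * ∑ i : Fin k, d (Fin.castLE hk.le i))
    (s : Fin n → ℝ) (hs : ∀ j, s j = max (-(d j / (2 * α)) + lam) 0) :
    (∀ j : Fin n, 0 < s j ↔ (j : ℕ) < k) ∧ (∑ j, s j = 1) ∧
      ∀ j, 0 ≤ s j ∧ s j ≤ 1 := by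
  have hkR : (0:ℝ) < (k:ℝ) := by exact_mod_cast hk1
  have hk0 : (k:ℝ) ≠ 0 := ne_of_gt hkR
  have hα0 : (2*α) ≠ 0 := by positivity
  set S := ∑ i : Fin k, d (Fin.castLE hk.le i) with hSdef
  have h2α : 2*α = (k:ℝ) * d ⟨k,hk⟩ - S := by rw [hα]; ring
  have hlam' : lam = d ⟨k,hk⟩ / (2*α) := by
    rw [hlam]
    field_simp
    linear_combination h2α
  have key : ∀ j, -(d j / (2*α)) + lam = (d ⟨k,hk⟩ - d j)/(2*α) := by
    intro j; rw [hlam']; ring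
  -- positivity characterization
  have hpos : ∀ j : Fin n, 0 < s j ↔ (j:ℕ) < k := by
    intro j
    rw [hs j, key j]
    rw [lt_max_iff]
    simp only [lt_self_iff_false, or_false]
    constructor
    · intro h
      by_contra hge
      push_neg at hge
      have hle : d ⟨k,hk⟩ ≤ d j := hmono (by simp [Fin.le_def]; omega)
      have : (d ⟨k,hk⟩ - d j)/(2*α) ≤ 0 :=
        div_nonpos_of_nonpos_of_nonneg (by linarith) (by positivity)
      linarith
    · intro hj
      have hle : d j ≤ d ⟨k-1, by omega⟩ := hmono (by simp [Fin.le_def]; omega)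
      apply div_pos (by linarith) (by positivity)
  -- zero for j ≥ k
  have hnn : ∀ j, 0 ≤ s j := fun j => (hs j).symm ▸ le_max_right _ _
  have hzero : ∀ j : Fin n, ¬((j:ℕ) < k) → s j = 0 := by
    intro j hj
    have := (hpos j).not.mpr hj
    linarith [hnn j, lt_of_le_of_ne (hnn j)]
  -- express s on the first k coordinates
  have hval : ∀ i : Fin k, s (Fin.castLE hk.le i) =
      (d ⟨k,hk⟩ - d (Fin.castLE hk.le i))/(2*α) := by
    intro i
    rw [hs, key]
    apply max_eq_left
    have : (0:ℝ) < (d ⟨k,hk⟩ - d (Fin.castLE hk.le i))/(2*α) := by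
      have hle : d (Fin.castLE hk.le i) ≤ d ⟨k-1, by omega⟩ := by
        apply hmono
        simp [Fin.le_def]
        omega
      apply div_pos (by linarith) (by positivity)
    linarith
  -- the sum
  have hsum : ∑ j, s j = 1 := by
    classical
    set f : ℕ → ℝ := fun i => if h : i < n then s ⟨i, h⟩ else 0 with hf
    have e1 : ∑ j : Fin n, s j = ∑ i ∈ Finset.range n, f i := by
      rw [← Fin.sum_univ_eq_sum_range]
      apply Finset.sum_congr rfl
      intro j _
      simp [hf, j.isLt]
    have e2 : ∑ i ∈ Finset.range n, f i = ∑ i ∈ Finset.range k, f i := by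
      symm
      apply Finset.sum_subset (Finset.range_subset_range.mpr hk.le)
      intro i hi hni
      simp only [Finset.mem_range] at hi hni
      simp only [hf, dif_pos hi]
      exact hzero ⟨i, hi⟩ (by simpa using hni)
    have e3 : ∑ i ∈ Finset.range k, f i = ∑ i : Fin k, s (Fin.castLE hk.le i) := by
      rw [← Fin.sum_univ_eq_sum_range]
      apply Finset.sum_congr rfl
      intro i _
      have hi : (i:ℕ) < n := lt_of_lt_of_le i.isLt hk.le
      simp only [hf, dif_pos hi]
      rfl
    rw [e1, e2, e3]
    have : ∑ i : Fin k, s (Fin.castLE hk.le i)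
        = ∑ i : Fin k, (d ⟨k,hk⟩ - d (Fin.castLE hk.le i))/(2*α) := by
      exact Finset.sum_congr rfl fun i _ => hval i
    rw [this, ← Finset.sum_div, Finset.sum_sub_distrib, Finset.sum_const,
      Finset.card_univ, Fintype.card_fin, nsmul_eq_mul, ← hSdef, ← h2α,
      div_self hα0]
  refine ⟨hpos, hsum, fun j => ⟨hnn j, ?_⟩⟩
  calc s j ≤ ∑ i, s i := Finset.single_le_sum (fun i _ => hnn i) (Finset.mem_univ j)
    _ = 1 := hsum
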